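/- With the setup of the iterated matching-removal process on a bipartite graph G (removing k maximum matchings to form 𝓜_k and residual graph G_k), let I*_k be a maximum k-dependent set of G and E'_k the set of edges of G[I*_k] not contained in 𝓜_k. Then |𝓜_k| ≤ k·|I*_k|/2 − |E'_k| + k·|V \ I*_k|. -/

import Mathlib

open scoped Classical

variable {V : Type*} [Fintype V] [DecidableEq V]

/-- A matching of `G`, given as a finite set of edges of `G` that are pairwise vertex-disjoint. -/
def IsMatchingE (G : SimpleGraph V) (M : Finset (Sym2 V)) : Prop :=
  ↑M ⊆ G.edgeSet ∧ (M : Set (Sym2 V)).Pairwise fun e f => ∀ v, v ∈ e → v ∉ f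

/-- A maximum-cardinality matching of `G`. -/
def IsMaxMatchingE (G : SimpleGraph V) (M : Finset (Sym2 V)) : Prop :=
  IsMatchingE G M ∧ ∀ M', IsMatchingE G M' → M'.card ≤ M.card

/-- An independent set of `G`. -/
def IsIndepF (G : SimpleGraph V) (S : Finset V) : Prop :=
  ∀ v ∈ S, ∀ w ∈ S, ¬G.Adj v w

/-- A maximum-cardinality independent set of `G`. -/
def IsMaxIndepF (G : SimpleGraph V) (S : Finset V) : Prop :=
  IsIndepF G S ∧ ∀ S', IsIndepF G S' → S'.card ≤ S.card

/-- A `k`-dependent set: every vertex of the induced subgraph `G[S]` has degree at most `k`. -/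
def KDepSet (G : SimpleGraph V) (k : ℕ) (S : Finset V) : Prop :=
  ∀ v ∈ S, (S.filter fun w => G.Adj v w).card ≤ k

/-- A maximum-cardinality `k`-dependent set of `G`. -/
def IsMaxKDep (G : SimpleGraph V) (k : ℕ) (S : Finset V) : Prop :=
  KDepSet G k S ∧ ∀ T, KDepSet G k T → T.card ≤ S.card

/-- The edges of the induced subgraph `G[S]`. -/
noncomputable def inducedEdges (G : SimpleGraph V) (S : Finset V) : Finset (Sym2 V) :=
  G.edgeFinset.filter fun e => ∀ v ∈ e, v ∈ S

/-- The residual graph after deleting the matchings `M 0, ..., M (i-1)` from `G`. -/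
def resid (G : SimpleGraph V) (M : ℕ → Finset (Sym2 V)) (i : ℕ) : SimpleGraph V :=
  G.deleteEdges (⋃ j ∈ Set.Iio i, (M j : Set (Sym2 V)))

/-- The accumulated set of deleted edges `M 0 ∪ ... ∪ M (k-1)`. -/
def accumM (M : ℕ → Finset (Sym2 V)) (k : ℕ) : Finset (Sym2 V) :=
  (Finset.range k).biUnion M

theorem stmt4 (G : SimpleGraph V) (hG : G.Colorable 2) (k : ℕ) (hk : 1 ≤ k)
    (M : ℕ → Finset (Sym2 V)) (hM : ∀ i < k, IsMaxMatchingE (resid G M i) (M i))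
    (Istar : Finset V) (hIstar : IsMaxKDep G k Istar) :
    ((accumM M k).card : ℝ) ≤
      k * Istar.card / 2 - ((inducedEdges G Istar) \ accumM M k).card
        + k * (Istarᶜ).card := by
  classical
  -- accumM ⊆ G.edgeFinset
  have hsub : accumM M k ⊆ G.edgeFinset := by
    intro e he
    simp only [accumM, Finset.mem_biUnion, Finset.mem_range] at he
    obtain ⟨j, hj, hje⟩ := he
    have h1 : e ∈ (resid G M j).edgeSet := (hM j hj).1.1 hje
    rw [SimpleGraph.mem_edgeFinset]
    simp only [resid, SimpleGraph.edgeSet_deleteEdges, Set.mem_diff] at h1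
    exact h1.1
  -- each vertex lies in at most k edges of accumM
  have hfk : ∀ v : V, ((accumM M k).filter fun e => v ∈ e).card ≤ k := by
    intro v
    have hss : ((accumM M k).filter fun e => v ∈ e) ⊆
        (Finset.range k).biUnion fun j => (M j).filter fun e => v ∈ e := by
      intro e he
      simp only [Finset.mem_filter, accumM, Finset.mem_biUnion, Finset.mem_range] at he ⊢
      obtain ⟨⟨j, hj, hje⟩, hv⟩ := he
      exact ⟨j, hj, hje, hv⟩
    calc ((accumM M k).filter fun e => v ∈ e).card
        ≤ ((Finset.range k).biUnion fun j => (M j).filter fun e => v ∈ e).card :=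
          Finset.card_le_card hss
      _ ≤ ∑ j ∈ Finset.range k, ((M j).filter fun e => v ∈ e).card :=
          Finset.card_biUnion_le
      _ ≤ ∑ _j ∈ Finset.range k, 1 := by
          apply Finset.sum_le_sum
          intro j hj
          rw [Finset.mem_range] at hj
          apply Finset.card_le_one.2
          intro a ha b hb
          rw [Finset.mem_filter] at ha hb
          by_contra hne
          exact ((hM j hj).1.2 ha.1 hb.1 hne) v ha.2 hb.2
      _ = k := by simp
  -- handshake: 2 * |inducedEdges| ≤ k * |Istar|
  have hdeg : ∀ v ∈ Istar, ((inducedEdges G Istar).filter fun e => v ∈ e).card ≤ k := by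
    intro v hv
    have hle : ((inducedEdges G Istar).filter fun e => v ∈ e).card ≤
        (Istar.filter fun w => G.Adj v w).card := by
      apply Finset.card_le_card_of_injOn
        (fun e => if h : v ∈ e then Sym2.Mem.other' h else v)
      · intro e he
        rw [Finset.mem_coe, Finset.mem_filter] at he
        obtain ⟨hei, hve⟩ := he
        simp only [inducedEdges, Finset.mem_filter, SimpleGraph.mem_edgeFinset] at hei
        simp only [dif_pos hve]
        rw [Finset.mem_coe, Finset.mem_filter]
        refine ⟨hei.2 _ (Sym2.other_mem' hve), ?_⟩
        have h1 := hei.1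
        rw [← Sym2.other_spec' hve] at h1
        exact h1
      · intro e1 h1 e2 h2 heq
        rw [Finset.mem_coe, Finset.mem_filter] at h1 h2
        simp only [dif_pos h1.2, dif_pos h2.2] at heq
        rw [← Sym2.other_spec' h1.2, ← Sym2.other_spec' h2.2, heq]
    exact hle.trans (hIstar.1 v hv)
  have hpair : ∀ e ∈ inducedEdges G Istar, (Istar.filter fun v => v ∈ e).card = 2 := by
    intro e he
    simp only [inducedEdges, Finset.mem_filter, SimpleGraph.mem_edgeFinset] at he
    induction e with
    | h a b =>
      have hab : a ≠ b := by
        intro h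
        have := he.1
        rw [SimpleGraph.mem_edgeSet] at this
        exact this.ne (h ▸ rfl)
      have ha : a ∈ Istar := he.2 a (by simp)
      have hb : b ∈ Istar := he.2 b (by simp)
      have : (Istar.filter fun v => v ∈ s(a, b)) = {a, b} := by
        ext x
        simp only [Finset.mem_filter, Sym2.mem_iff, Finset.mem_insert, Finset.mem_singleton]
        constructor
        · rintro ⟨_, h⟩; exact h
        · rintro (rfl | rfl) <;> simp [ha, hb]
      rw [this, Finset.card_insert_of_notMem (by simpa using hab), Finset.card_singleton]
  have hhand : 2 * (inducedEdges G Istar).card ≤ k * Istar.card := by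
    have hcount : ∑ e ∈ inducedEdges G Istar, (Istar.filter fun v => v ∈ e).card
        = ∑ v ∈ Istar, ((inducedEdges G Istar).filter fun e => v ∈ e).card := by
      simp_rw [Finset.card_filter]
      exact Finset.sum_comm
    calc 2 * (inducedEdges G Istar).card
        = ∑ e ∈ inducedEdges G Istar, (Istar.filter fun v => v ∈ e).card := by
          rw [Finset.sum_congr rfl hpair]
          simp [mul_comm]
      _ = ∑ v ∈ Istar, ((inducedEdges G Istar).filter fun e => v ∈ e).card := hcount
      _ ≤ ∑ _v ∈ Istar, k := Finset.sum_le_sum hdeg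
      _ = k * Istar.card := by simp [mul_comm]
  -- edges of accumM outside inducedEdges touch Istarᶜ
  have hB : ((accumM M k) \ inducedEdges G Istar).card ≤ k * (Istarᶜ).card := by
    have hss : (accumM M k) \ inducedEdges G Istar ⊆
        (Istarᶜ).biUnion fun v => (accumM M k).filter fun e => v ∈ e := by
      intro e he
      rw [Finset.mem_sdiff] at he
      obtain ⟨heA, heI⟩ := he
      have heG := hsub heA
      have : ∃ v ∈ e, v ∉ Istar := by
        by_contra h
        push_neg at h
        exact heI (by simp only [inducedEdges, Finset.mem_filter]; exact ⟨heG, h⟩)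
      obtain ⟨v, hve, hvI⟩ := this
      rw [Finset.mem_biUnion]
      exact ⟨v, Finset.mem_compl.2 hvI, Finset.mem_filter.2 ⟨heA, hve⟩⟩
    calc ((accumM M k) \ inducedEdges G Istar).card
        ≤ ((Istarᶜ).biUnion fun v => (accumM M k).filter fun e => v ∈ e).card :=
          Finset.card_le_card hss
      _ ≤ ∑ v ∈ Istarᶜ, ((accumM M k).filter fun e => v ∈ e).card :=
          Finset.card_biUnion_le
      _ ≤ ∑ _v ∈ Istarᶜ, k := Finset.sum_le_sum fun v _ => hfk v
      _ = k * (Istarᶜ).card := by simp [mul_comm]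
  -- split accumM
  have hsplit : (accumM M k).card =
      ((accumM M k) ∩ inducedEdges G Istar).card
        + ((accumM M k) \ inducedEdges G Istar).card :=
    (Finset.card_inter_add_card_sdiff _ _).symm
  have hIsplit : (inducedEdges G Istar).card =
      ((accumM M k) ∩ inducedEdges G Istar).card
        + ((inducedEdges G Istar) \ accumM M k).card := by
    rw [Finset.inter_comm]
    exact (Finset.card_inter_add_card_sdiff _ _).symm
  -- conclude over ℝ
  have h1 : ((accumM M k).card : ℝ) =
      (((accumM M k) ∩ inducedEdges G Istar).card : ℝ)
        + (((accumM M k) \ inducedEdges G Istar).card : ℝ) := by exact_mod_cast hsplit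
  have h2 : ((inducedEdges G Istar).card : ℝ) =
      (((accumM M k) ∩ inducedEdges G Istar).card : ℝ)
        + (((inducedEdges G Istar) \ accumM M k).card : ℝ) := by exact_mod_cast hIsplit
  have h3 : 2 * ((inducedEdges G Istar).card : ℝ) ≤ k * Istar.card := by exact_mod_cast hhand
  have h4 : (((accumM M k) \ inducedEdges G Istar).card : ℝ) ≤ k * (Istarᶜ).card := by
    exact_mod_cast hB
  linarith
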